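/- Let (V, ⟨·,·⟩, A) be a Jacobi–Ricci commuting model which is not Einstein, whose Ricci operator ρ is complex diagonalizable with spectrum of the complexification equal to {2a₁ + 2a₂·i, 2a₁ − 2a₂·i} where a₂ > 0. Then there exist a finite-dimensional positive definite real inner product space (V₀, g) and algebraic curvature tensors A₁, A₂ on V₀, Einstein with Einstein constants a₁ and a₂ respectively, such that (V, ⟨·,·⟩, A) is isomorphic as a model to M(V₀,g,A₁,A₂). -/

import Mathlib

open TensorProduct

/-- `f : W⁴ → ℝ` is multilinear over `ℝ` in each of its four slots. -/
def IsML {W : Type*} [AddCommGroup W] [Module ℝ W] (f : W → W → W → W → ℝ) : Prop :=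
  (∀ x x' y z w, f (x + x') y z w = f x y z w + f x' y z w) ∧
  (∀ (c : ℝ) x y z w, f (c • x) y z w = c * f x y z w) ∧
  (∀ x y y' z w, f x (y + y') z w = f x y z w + f x y' z w) ∧
  (∀ (c : ℝ) x y z w, f x (c • y) z w = c * f x y z w) ∧
  (∀ x y z z' w, f x y (z + z') w = f x y z w + f x y z' w) ∧
  (∀ (c : ℝ) x y z w, f x y (c • z) w = c * f x y z w) ∧
  (∀ x y z w w', f x y z (w + w') = f x y z w + f x y z w') ∧
  (∀ (c : ℝ) x y z w, f x y z (c • w) = c * f x y z w)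

/-- The symmetries of the Riemann curvature tensor. -/
def IsCurvSym {W : Type*} [AddCommGroup W] [Module ℝ W] (f : W → W → W → W → ℝ) : Prop :=
  (∀ x y z w, f x y z w = - f y x z w) ∧
  (∀ x y z w, f x y z w = f z w x y) ∧
  (∀ x y z w, f x y z w + f y z x w + f z x y w = 0)

/-- An algebraic curvature tensor: a multilinear map with the curvature symmetries. -/
def IsACT {W : Type*} [AddCommGroup W] [Module ℝ W] (f : W → W → W → W → ℝ) : Prop :=
  IsML f ∧ IsCurvSym f

/-- The defining value of `⟨ρ x, y⟩`: the trace of `z ↦ ½𝓡(z,x)y + ½𝓡(z,y)x`,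
where `R` is the (curried) curvature operator. -/
noncomputable def ricciForm {V : Type*} [AddCommGroup V] [Module ℝ V]
    (R : V →ₗ[ℝ] V →ₗ[ℝ] V →ₗ[ℝ] V) (x y : V) : ℝ :=
  LinearMap.trace ℝ V
    (((1 : ℝ) / 2) • ((R.flip x).flip y) + ((1 : ℝ) / 2) • ((R.flip y).flip x))

/-- The Jacobi--Ricci commuting identity of Lemma 1 (3). -/
def JRComm {V : Type*} [AddCommGroup V] [Module ℝ V]
    (A : V → V → V → V → ℝ) (ρ : V →ₗ[ℝ] V) : Prop :=
  ∀ v₁ v₂ v₃ v₄ : V,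
    A (ρ v₁) v₂ v₃ v₄ = A v₁ (ρ v₂) v₃ v₄ ∧
    A v₁ (ρ v₂) v₃ v₄ = A v₁ v₂ (ρ v₃) v₄ ∧
    A v₁ v₂ (ρ v₃) v₄ = A v₁ v₂ v₃ (ρ v₄)

/-- The ℂ-valued tensor `A₁ + i·A₂`. -/
noncomputable def acx {W : Type*} [AddCommGroup W] [Module ℝ W]
    (A₁ A₂ : W → W → W → W → ℝ) (x y z w : W) : ℂ :=
  (A₁ x y z w : ℂ) + Complex.I * (A₂ x y z w : ℂ)

/-- The complex multilinear extension `(A₁ + i·A₂)^ℂ` of `A₁ + i·A₂` to the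
complexification of `W`, where `W × W` is identified with `W ⊗ ℂ` via
`(x⁺, x⁻) ↔ x⁺ + i·x⁻`. -/
noncomputable def acExt {W : Type*} [AddCommGroup W] [Module ℝ W]
    (A₁ A₂ : W → W → W → W → ℝ) (p q r s : W × W) : ℂ :=
  acx A₁ A₂ p.1 q.1 r.1 s.1
  + Complex.I * (acx A₁ A₂ p.2 q.1 r.1 s.1 + acx A₁ A₂ p.1 q.2 r.1 s.1
      + acx A₁ A₂ p.1 q.1 r.2 s.1 + acx A₁ A₂ p.1 q.1 r.1 s.2)
  - (acx A₁ A₂ p.2 q.2 r.1 s.1 + acx A₁ A₂ p.2 q.1 r.2 s.1 + acx A₁ A₂ p.2 q.1 r.1 s.2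
      + acx A₁ A₂ p.1 q.2 r.2 s.1 + acx A₁ A₂ p.1 q.2 r.1 s.2 + acx A₁ A₂ p.1 q.1 r.2 s.2)
  - Complex.I * (acx A₁ A₂ p.2 q.2 r.2 s.1 + acx A₁ A₂ p.2 q.2 r.1 s.2
      + acx A₁ A₂ p.2 q.1 r.2 s.2 + acx A₁ A₂ p.1 q.2 r.2 s.2)
  + acx A₁ A₂ p.2 q.2 r.2 s.2

/-- The curvature tensor `A := Re((A₁ + i·A₂)^ℂ)` of the model `M(V₀,g,A₁,A₂)`. -/
noncomputable def modelA {W : Type*} [AddCommGroup W] [Module ℝ W]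
    (A₁ A₂ : W → W → W → W → ℝ) (p q r s : W × W) : ℝ :=
  (acExt A₁ A₂ p q r s).re

/-- The inner product `⟨(x⁺,x⁻),(y⁺,y⁻)⟩ = g(x⁺,y⁺) − g(x⁻,y⁻)` of the model
`M(V₀,g,A₁,A₂)`. -/
def modelB {W : Type*} [AddCommGroup W] [Module ℝ W]
    (g : LinearMap.BilinForm ℝ W) (p q : W × W) : ℝ :=
  g p.1 q.1 - g p.2 q.2

/-- `f` is Einstein with Einstein constant `a` on the positive definite inner product
space `(W, g)`: for every `g`-orthonormal basis `{e_k}` one has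
`Σ_k f(x, e_k, e_k, y) = a·g(x,y)`. -/
def IsEinsteinWith {W : Type*} [AddCommGroup W] [Module ℝ W]
    (g : LinearMap.BilinForm ℝ W) (f : W → W → W → W → ℝ) (a : ℝ) : Prop :=
  ∀ (n : ℕ) (b : Module.Basis (Fin n) ℝ W),
    (∀ i j, g (b i) (b j) = if i = j then 1 else 0) →
    ∀ x y, (∑ k, f x (b k) (b k) y) = a * g x y

/-- `f` is complex diagonalizable: the complexification of `f` acting on `ℂ ⊗ V` is
diagonalizable, i.e. the eigenspaces of the complexified operator span. -/
def IsCDiagonalizable {V : Type*} [AddCommGroup V] [Module ℝ V] (f : V →ₗ[ℝ] V) : Prop :=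
  (⨆ μ : ℂ, Module.End.eigenspace (LinearMap.baseChange ℂ f) μ) = ⊤

section Helpers
variable {V : Type*} [AddCommGroup V] [Module ℝ V]

lemma gram_li {ι : Type*} [Fintype ι] [DecidableEq ι] (B : LinearMap.BilinForm ℝ V)
    (c : ι → V) (ε : ι → ℝ) (hε : ∀ i, ε i ≠ 0)
    (h : ∀ i j, B (c i) (c j) = if i = j then ε i else 0) :
    LinearIndependent ℝ c := by
  rw [Fintype.linearIndependent_iff]
  intro g hg i
  have h2 := congrArg (fun v => B v (c i)) hg
  simp only [map_sum, map_smul, LinearMap.sum_apply, LinearMap.smul_apply, smul_eq_mul, h,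
    map_zero, LinearMap.zero_apply, mul_ite, mul_zero, Finset.sum_ite_eq',
    Finset.mem_univ, if_true] at h2
  exact (mul_eq_zero.mp h2).resolve_right (hε i)

lemma trace_formula {ι : Type*} [Fintype ι] [DecidableEq ι] [Module.Finite ℝ V] [Module.Free ℝ V]
    (B : LinearMap.BilinForm ℝ V)
    (b : Module.Basis ι ℝ V) (ε : ι → ℝ) (hε : ∀ i, ε i * ε i = 1)
    (h : ∀ i j, B (b i) (b j) = if i = j then ε i else 0) (f : V →ₗ[ℝ] V) :
    LinearMap.trace ℝ V f = ∑ i, ε i * B (f (b i)) (b i) := by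
  have hrepr : ∀ (w : V) i, b.repr w i = ε i * B w (b i) := by
    intro w i
    have h0 : B w (b i) = b.repr w i * ε i := by
      conv_lhs => rw [← b.sum_repr w]
      simp only [map_sum, map_smul, LinearMap.sum_apply, LinearMap.smul_apply, smul_eq_mul, h,
        mul_ite, mul_zero, Finset.sum_ite_eq', Finset.mem_univ, if_true]
    rw [h0]
    calc b.repr w i = b.repr w i * (ε i * ε i) := by rw [hε i, mul_one]
    _ = ε i * (b.repr w i * ε i) := by ring
  rw [LinearMap.trace_eq_matrix_trace ℝ b, Matrix.trace]
  simp only [Matrix.diag, LinearMap.toMatrix_apply]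
  exact Finset.sum_congr rfl fun i _ => hrepr _ i

noncomputable def moduleOfJ (J : V →ₗ[ℝ] V) (hJ : ∀ x, J (J x) = -x) : Module ℂ V where
  smul c x := c.re • x + c.im • J x
  one_smul x := by show (1:ℂ).re • x + (1:ℂ).im • J x = x; simp
  mul_smul c d x := by
    show (c*d).re • x + (c*d).im • J x
      = (c.re) • ((d.re) • x + (d.im) • J x) + (c.im) • J ((d.re) • x + (d.im) • J x)
    simp only [Complex.mul_re, Complex.mul_im, map_add, map_smul, hJ, smul_add, smul_smul,
      smul_neg, sub_smul, add_smul]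
    abel
  smul_zero c := by show c.re • (0:V) + c.im • J 0 = 0; simp
  smul_add c x y := by
    show c.re • (x + y) + c.im • J (x + y) = (c.re • x + c.im • J x) + (c.re • y + c.im • J y)
    simp only [map_add, smul_add]; abel
  add_smul c d x := by
    show (c+d).re • x + (c+d).im • J x = (c.re • x + c.im • J x) + (d.re • x + d.im • J x)
    simp only [Complex.add_re, Complex.add_im, add_smul]; abel
  zero_smul x := by show (0:ℂ).re • x + (0:ℂ).im • J x = 0; simp

lemma moduleOfJ_smul (J : V →ₗ[ℝ] V) (hJ : ∀ x, J (J x) = -x) (c : ℂ) (x : V) :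
    (letI := moduleOfJ J hJ; c • x) = c.re • x + c.im • J x := rfl

lemma towerOfJ (J : V →ₗ[ℝ] V) (hJ : ∀ x, J (J x) = -x) :
    letI := moduleOfJ J hJ; IsScalarTower ℝ ℂ V := by
  letI := moduleOfJ J hJ
  refine ⟨fun r c x => ?_⟩
  show ((r • c).re) • x + ((r • c).im) • J x = r • (c.re • x + c.im • J x)
  simp only [Complex.real_smul, Complex.mul_re, Complex.mul_im, Complex.ofReal_re,
    Complex.ofReal_im, zero_mul, sub_zero, add_zero, mul_zero, smul_add, smul_smul]

lemma quad_id [FiniteDimensional ℝ V]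
    (ρ : V →ₗ[ℝ] V) (a₁ a₂ : ℝ)
    (hdiag : IsCDiagonalizable ρ)
    (hspec : spectrum ℂ (LinearMap.baseChange ℂ ρ) =
      {((2 * a₁ : ℝ) : ℂ) + ((2 * a₂ : ℝ) : ℂ) * Complex.I,
       ((2 * a₁ : ℝ) : ℂ) - ((2 * a₂ : ℝ) : ℂ) * Complex.I}) :
    ∀ x : V, ρ (ρ x) - (4 * a₁) • ρ x + (4 * a₁ ^ 2 + 4 * a₂ ^ 2) • x = 0 := by
  intro x
  set f := LinearMap.baseChange ℂ ρ with hf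
  set P : (ℂ ⊗[ℝ] V) →ₗ[ℂ] (ℂ ⊗[ℝ] V) :=
    f ∘ₗ f - ((4 * a₁ : ℝ) : ℂ) • f + ((4 * a₁ ^ 2 + 4 * a₂ ^ 2 : ℝ) : ℂ) • LinearMap.id with hP
  have hker : ∀ μ : ℂ, Module.End.eigenspace f μ ≤ LinearMap.ker P := by
    intro μ v hv
    rcases eq_or_ne v 0 with rfl | hv0
    · simp
    have heig : Module.End.HasEigenvalue f μ :=
      Module.End.hasEigenvalue_of_hasEigenvector ⟨hv, hv0⟩
    have hμ : μ ∈ spectrum ℂ f := Module.End.hasEigenvalue_iff_mem_spectrum.mp heig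
    rw [hspec] at hμ
    have hfv : f v = μ • v := Module.End.mem_eigenspace_iff.mp hv
    have hPol : μ * μ - ((4 * a₁ : ℝ) : ℂ) * μ + ((4 * a₁ ^ 2 + 4 * a₂ ^ 2 : ℝ) : ℂ) = 0 := by
      simp only [Set.mem_insert_iff, Set.mem_singleton_iff] at hμ
      rcases hμ with rfl | rfl <;> push_cast <;>
        linear_combination (4 * (a₂:ℂ)^2) * Complex.I_sq
    have hPv : P v = (μ * μ - ((4 * a₁ : ℝ) : ℂ) * μ
        + ((4 * a₁ ^ 2 + 4 * a₂ ^ 2 : ℝ) : ℂ)) • v := by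
      simp [hP, LinearMap.sub_apply, LinearMap.add_apply, LinearMap.comp_apply, hfv, map_smul,
        smul_smul, sub_smul, add_smul]
    rw [LinearMap.mem_ker, hPv, hPol, zero_smul]
  have hPzero : P = 0 := by
    have htop : (⊤ : Submodule ℂ (ℂ ⊗[ℝ] V)) ≤ LinearMap.ker P := by
      rw [← hdiag]; exact iSup_le hker
    exact LinearMap.ker_eq_top.mp (top_le_iff.mp htop)
  have hx : P ((1:ℂ) ⊗ₜ[ℝ] x) = 0 := by rw [hPzero]; rfl
  have hexp : P ((1:ℂ) ⊗ₜ[ℝ] x)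
      = (1:ℂ) ⊗ₜ[ℝ] (ρ (ρ x) - (4 * a₁) • ρ x + (4 * a₁ ^ 2 + 4 * a₂ ^ 2) • x) := by
    have hs : ∀ (r : ℝ) (y : V), ((r : ℂ)) • ((1:ℂ) ⊗ₜ[ℝ] y) = (1:ℂ) ⊗ₜ[ℝ] (r • y) := by
      intro r y
      rw [TensorProduct.smul_tmul', ← TensorProduct.smul_tmul]
      norm_num [Complex.real_smul]
    simp only [hP, LinearMap.add_apply, LinearMap.sub_apply, LinearMap.comp_apply,
      LinearMap.smul_apply, LinearMap.id_apply, hf, LinearMap.baseChange_tmul, hs,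
      TensorProduct.tmul_sub, TensorProduct.tmul_add]
  rw [hexp] at hx
  have := congrArg (TensorProduct.lift ((LinearMap.lsmul ℝ V).comp Complex.reLm)) hx
  simpa using this

end Helpers

set_option maxHeartbeats 2000000
theorem statement8
    {V : Type*} [AddCommGroup V] [Module ℝ V] [FiniteDimensional ℝ V]
    (B : LinearMap.BilinForm ℝ V)
    (hBsymm : ∀ x y, B x y = B y x)
    (hBnondeg : ∀ x, (∀ y, B x y = 0) → x = 0)
    (A : V → V → V → V → ℝ) (hA : IsACT A)
    (R : V →ₗ[ℝ] V →ₗ[ℝ] V →ₗ[ℝ] V)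
    (hR : ∀ x y z w, B (R x y z) w = A x y z w)
    (ρ : V →ₗ[ℝ] V)
    (hρ : ∀ x y, B (ρ x) y = ricciForm R x y)
    (hJR : JRComm A ρ)
    (hnotEinstein : ¬ ∃ a : ℝ, ρ = a • LinearMap.id)
    (hdiag : IsCDiagonalizable ρ)
    (a₁ a₂ : ℝ) (ha₂ : 0 < a₂)
    (hspec : spectrum ℂ (LinearMap.baseChange ℂ ρ) =
      {((2 * a₁ : ℝ) : ℂ) + ((2 * a₂ : ℝ) : ℂ) * Complex.I,
       ((2 * a₁ : ℝ) : ℂ) - ((2 * a₂ : ℝ) : ℂ) * Complex.I}) :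
    ∃ (V₀ : Submodule ℝ V) (g : LinearMap.BilinForm ℝ V₀)
      (A₁ A₂ : V₀ → V₀ → V₀ → V₀ → ℝ),
      (∀ x y, g x y = g y x) ∧
      (∀ x : V₀, x ≠ 0 → 0 < g x x) ∧
      IsACT A₁ ∧ IsACT A₂ ∧
      IsEinsteinWith g A₁ a₁ ∧ IsEinsteinWith g A₂ a₂ ∧
      ∃ Θ : (V₀ × V₀) ≃ₗ[ℝ] V,
        (∀ p q : V₀ × V₀, B (Θ p) (Θ q) = modelB g p q) ∧
        (∀ p q r s : V₀ × V₀, A (Θ p) (Θ q) (Θ r) (Θ s) = modelA A₁ A₂ p q r s) := by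
  classical
  obtain ⟨⟨ml1, ml2, ml3, ml4, ml5, ml6, ml7, ml8⟩, s1, s2, s3⟩ := hA
  have hneg1 : ∀ x y z w : V, A (-x) y z w = - A x y z w := fun x y z w => by
    rw [← neg_one_smul ℝ x, ml2]; ring
  have hneg3 : ∀ x y z w : V, A x y (-z) w = - A x y z w := fun x y z w => by
    rw [← neg_one_smul ℝ z, ml6]; ring
  -- symmetry consequences
  have hs34 : ∀ x y z w : V, A x y z w = - A x y w z := by
    intro x y z w
    calc A x y z w = A z w x y := s2 x y z w
    _ = - A w z x y := s1 z w x y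
    _ = - A x y w z := by rw [← s2 w z x y]
  have hswap : ∀ x q y : V, A x q q y = A y q q x := by
    intro x q y
    calc A x q q y = A q y x q := s2 x q q y
    _ = - A y q x q := s1 q y x q
    _ = A y q q x := by rw [← hs34 y q q x]
  have hclaim1 : ∀ z u w : V, A z u w z = A u z z w := by
    intro z u w
    calc A z u w z = A w z z u := s2 z u w z
    _ = A u z z w := hswap w z u
  -- ρ is B-self-adjoint
  have hricsymm : ∀ x y : V, ricciForm R x y = ricciForm R y x := by
    intro x y; unfold ricciForm; rw [add_comm]
  have hselfadj : ∀ x y, B (ρ x) y = B x (ρ y) := by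
    intro x y
    rw [hρ, hricsymm, ← hρ, hBsymm]
  -- the complex structure J
  have ha₂' : (2*a₂ : ℝ) ≠ 0 := by positivity
  set J : V →ₗ[ℝ] V := (2*a₂)⁻¹ • (ρ - (2*a₁) • LinearMap.id) with hJdef
  have hJapp : ∀ x, J x = (2*a₂)⁻¹ • (ρ x - (2*a₁) • x) := by
    intro x; simp [hJdef, LinearMap.smul_apply, LinearMap.sub_apply]
  have hρJ : ∀ x, ρ x = (2*a₁) • x + (2*a₂) • J x := by
    intro x; rw [hJapp, smul_smul, mul_inv_cancel₀ ha₂', one_smul]; abel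
  have hquad := quad_id ρ a₁ a₂ hdiag hspec
  have hq' : ∀ x, ρ (ρ x) = (4*a₁) • ρ x - (4*a₁^2+4*a₂^2) • x := by
    intro x
    have h := hquad x
    rw [sub_add_eq_add_sub] at h
    exact eq_sub_of_add_eq (sub_eq_zero.mp h)
  have hJJ : ∀ x, J (J x) = - x := by
    intro x
    rw [hJapp (J x), hJapp x, map_smul, map_sub, map_smul, hq']
    match_scalars <;> field_simp <;> ring
  have hcommJρ : ∀ z, ρ (J z) = J (ρ z) := by
    intro z; rw [hJapp z, hJapp (ρ z), map_smul, map_sub, map_smul]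
  -- B-compatibilities of J
  have hJB : ∀ x y, B (J x) y = B x (J y) := by
    intro x y
    rw [hJapp x, hJapp y]
    simp only [map_smul, map_sub, LinearMap.smul_apply, LinearMap.sub_apply, smul_eq_mul,
      LinearMap.map_smul, LinearMap.map_sub]
    rw [hselfadj]
  have hJB2 : ∀ x y, B (J x) (J y) = - B x y := by
    intro x y
    rw [hJB x (J y)]
    calc B x (J (J y)) = B x (-y) := by rw [hJJ]
    _ = - B x y := by rw [map_neg]
  -- moving J between slots of A
  set sc : ℝ := (2*a₂)⁻¹ with hsc
  set tc : ℝ := -(2*a₁) * (2*a₂)⁻¹ with htc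
  have hJst : ∀ x, J x = sc • ρ x + tc • x := by
    intro x; rw [hJapp]; match_scalars <;> ring
  have hm21 : ∀ x y z w : V, A x (J y) z w = A (J x) y z w := by
    intro x y z w
    rw [hJst y, ml3, ml4, ml4, ← (hJR x y z w).1, hJst x, ml1, ml2, ml2]
  have hm31 : ∀ x y z w : V, A x y (J z) w = A (J x) y z w := by
    intro x y z w
    rw [hJst z, ml5, ml6, ml6, ← (hJR x y z w).2.1, ← (hJR x y z w).1,
      hJst x, ml1, ml2, ml2]
  have hm41 : ∀ x y z w : V, A x y z (J w) = A (J x) y z w := by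
    intro x y z w
    rw [hJst w, ml7, ml8, ml8, ← (hJR x y z w).2.2, ← (hJR x y z w).2.1, ← (hJR x y z w).1,
      hJst x, ml1, ml2, ml2]
  have hm23 : ∀ x y z w : V, A x (J y) z w = A x y (J z) w := by
    intro x y z w; rw [hm21, ← hm31]
  have hJJ1 : ∀ x y z w : V, A (J (J x)) y z w = - A x y z w := by
    intro x y z w; rw [hJJ, hneg1]
  -- complex module structure
  letI instMod : Module ℂ V := moduleOfJ J hJJ
  letI instTower : IsScalarTower ℝ ℂ V := towerOfJ J hJJ
  letI : FiniteDimensional ℂ V := Module.Finite.right ℝ ℂ V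
  have hsmulJ : ∀ (c : ℂ) (x : V), c • x = c.re • x + c.im • J x := fun c x => rfl
  -- the complex bilinear form φ
  have hφa1 : ∀ (x x' y : V), ((B (x + x') y : ℝ) : ℂ) - Complex.I * (B (J (x + x')) y : ℝ)
      = (((B x y : ℝ) : ℂ) - Complex.I * (B (J x) y : ℝ))
        + (((B x' y : ℝ) : ℂ) - Complex.I * (B (J x') y : ℝ)) := by
    intro x x' y
    simp only [map_add, LinearMap.add_apply, Complex.ofReal_add]
    ring
  have hφs1 : ∀ (c : ℂ) (x y : V), ((B (c • x) y : ℝ) : ℂ) - Complex.I * (B (J (c • x)) y : ℝ)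
      = c * (((B x y : ℝ) : ℂ) - Complex.I * (B (J x) y : ℝ)) := by
    intro c x y
    rw [hsmulJ]
    simp only [map_add, map_smul, LinearMap.add_apply, LinearMap.smul_apply, smul_eq_mul,
      hJJ, smul_neg, map_neg, LinearMap.neg_apply]
    apply Complex.ext <;>
      simp [Complex.add_re, Complex.add_im, Complex.mul_re, Complex.mul_im] <;> ring
  have hφa2 : ∀ (x y y' : V), ((B x (y + y') : ℝ) : ℂ) - Complex.I * (B (J x) (y + y') : ℝ)
      = (((B x y : ℝ) : ℂ) - Complex.I * (B (J x) y : ℝ))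
        + (((B x y' : ℝ) : ℂ) - Complex.I * (B (J x) y' : ℝ)) := by
    intro x y y'
    simp only [map_add, Complex.ofReal_add]
    ring
  have hφs2 : ∀ (c : ℂ) (x y : V), ((B x (c • y) : ℝ) : ℂ) - Complex.I * (B (J x) (c • y) : ℝ)
      = c * (((B x y : ℝ) : ℂ) - Complex.I * (B (J x) y : ℝ)) := by
    intro c x y
    rw [hsmulJ]
    simp only [map_add, map_smul, smul_eq_mul]
    rw [show B x (J y) = B (J x) y from (hJB x y).symm, hJB2]
    apply Complex.ext <;>
      simp [Complex.add_re, Complex.add_im, Complex.mul_re, Complex.mul_im] <;> ring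
  set φ : V →ₗ[ℂ] V →ₗ[ℂ] ℂ := LinearMap.mk₂ ℂ
    (fun x y => ((B x y : ℝ) : ℂ) - Complex.I * (B (J x) y : ℝ))
    hφa1 (fun c x y => by rw [smul_eq_mul]; exact hφs1 c x y)
    hφa2 (fun c x y => by rw [smul_eq_mul]; exact hφs2 c x y) with hφdef
  have hφapp : ∀ x y, φ x y = ((B x y : ℝ) : ℂ) - Complex.I * (B (J x) y : ℝ) := by
    intro x y; rw [hφdef]; rfl
  have hφsymm : φ.IsSymm := by
    rw [LinearMap.isSymm_def]
    intro x y
    simp only [RingHom.id_apply, hφapp]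
    rw [hBsymm x y, show B (J x) y = B (J y) x from by rw [hJB, hBsymm]]
  letI : Invertible (2:ℂ) := invertibleOfNonzero two_ne_zero
  obtain ⟨v, hv⟩ := LinearMap.BilinForm.exists_orthogonal_basis hφsymm
  have hvne : ∀ k, φ (v k) (v k) ≠ 0 := by
    intro k hk
    have hall : ∀ y, φ (v k) y = 0 := by
      intro y
      conv_lhs => rw [← v.sum_repr y]
      rw [map_sum]
      refine Finset.sum_eq_zero fun j _ => ?_
      rw [map_smul, smul_eq_mul]
      rcases eq_or_ne k j with rfl | hkj
      · rw [hk, mul_zero]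
      · rw [hv hkj, mul_zero]
    have hB0 : ∀ y, B (v k) y = 0 := by
      intro y
      have h := hall y
      rw [hφapp] at h
      have hre := congrArg Complex.re h
      simpa using hre
    exact v.ne_zero k (hBnondeg _ hB0)
  have hsq : ∀ k, ∃ c : ℂ, c ≠ 0 ∧ c ^ 2 * φ (v k) (v k) = 1 := by
    intro k
    obtain ⟨c, hc⟩ := IsAlgClosed.exists_pow_nat_eq ((φ (v k) (v k))⁻¹) (n := 2) two_pos
    refine ⟨c, ?_, ?_⟩
    · rintro rfl
      rw [zero_pow (by norm_num)] at hc
      exact inv_ne_zero (hvne k) hc.symm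
    · rw [hc, inv_mul_cancel₀ (hvne k)]
  choose cc hc0 hc1 using hsq
  set E := v.isUnitSMul (fun k => (hc0 k).isUnit) with hEdef
  have hE : ∀ k, E k = cc k • v k := fun k => Module.Basis.isUnitSMul_apply _ k
  have hφE : ∀ j k, φ (E j) (E k) = if j = k then 1 else 0 := by
    intro j k
    rw [hE, hE, map_smul, LinearMap.map_smul₂, smul_eq_mul, smul_eq_mul]
    rcases eq_or_ne j k with rfl | hjk
    · rw [if_pos rfl, ← mul_assoc, ← sq, hc1]
    · rw [if_neg hjk, hv hjk, mul_zero, mul_zero]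
  have hBe : ∀ j k, B (E j) (E k) = if j = k then 1 else 0 := by
    intro j k
    have h := hφE j k
    rw [hφapp] at h
    have hre := congrArg Complex.re h
    simpa [apply_ite Complex.re] using hre
  have hBJe : ∀ j k, B (J (E j)) (E k) = 0 := by
    intro j k
    have h := hφE j k
    rw [hφapp] at h
    have him := congrArg Complex.im h
    simp [apply_ite Complex.im] at him
    linarith
  -- the real form of everything
  set V₀ : Submodule ℝ V := Submodule.span ℝ (Set.range (E : _ → V)) with hV₀def
  have hmemE : ∀ k, (E k : V) ∈ V₀ := fun k => Submodule.subset_span ⟨k, rfl⟩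
  have hJ00 : ∀ x ∈ V₀, ∀ y ∈ V₀, B (J x) y = 0 := by
    have hgen : ∀ k, ∀ y ∈ V₀, B (J (E k)) y = 0 := by
      intro k y hy
      induction hy using Submodule.span_induction with
      | mem z hz => obtain ⟨j, rfl⟩ := hz; exact hBJe k j
      | zero => simp
      | add u w hu hw ihu ihw => rw [map_add, ihu, ihw, add_zero]
      | smul c u hu ihu => rw [map_smul, smul_eq_mul, ihu, mul_zero]
    intro x hx y hy
    induction hx using Submodule.span_induction with
    | mem z hz => obtain ⟨k, rfl⟩ := hz; exact hgen k y hy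
    | zero => simp
    | add u w hu hw ihu ihw =>
        rw [map_add, map_add, LinearMap.add_apply, ihu, ihw, add_zero]
    | smul c u hu ihu =>
        rw [map_smul, map_smul, LinearMap.smul_apply, smul_eq_mul, ihu, mul_zero]
  have hliE : LinearIndependent ℝ (E : _ → V) :=
    gram_li B _ (fun _ => (1:ℝ)) (fun _ => one_ne_zero) hBe
  set bV₀ := Module.Basis.span hliE with hbV₀def
  have hbV₀coe : ∀ k, (bV₀ k : V) = E k := fun k => congrArg Subtype.val (Module.Basis.span_apply hliE k)
  set g : LinearMap.BilinForm ℝ V₀ := B.restrict V₀ with hgdef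
  have hgapp : ∀ x y : V₀, g x y = B (x : V) (y : V) := fun x y => rfl
  have hgsymm : ∀ x y : V₀, g x y = g y x := fun x y => hBsymm _ _
  have hposdef : ∀ x : V₀, x ≠ 0 → 0 < g x x := by
    intro x hx
    have hxrep : (x : V) = ∑ k, bV₀.repr x k • (E k : V) := by
      have h0 := congrArg (V₀.subtype) (bV₀.sum_repr x)
      simp only [map_sum, map_smul, Submodule.subtype_apply, hbV₀coe] at h0; exact h0.symm
    have hsum : g x x = ∑ k, (bV₀.repr x k)^2 := by
      rw [hgapp, hxrep]
      simp only [map_sum, map_smul, LinearMap.sum_apply, LinearMap.smul_apply, smul_eq_mul, hBe,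
        mul_ite, mul_one, mul_zero, Finset.sum_ite_eq', Finset.mem_univ, if_true]
      exact Finset.sum_congr rfl fun k _ => (sq _).symm
    rw [hsum]
    have hne : ∃ k, bV₀.repr x k ≠ 0 := by
      by_contra hno
      push_neg at hno
      apply hx
      have hx0 : (x:V) = 0 := by rw [hxrep]; simp [hno]
      exact Subtype.ext hx0
    obtain ⟨k, hk⟩ := hne
    exact Finset.sum_pos' (fun i _ => sq_nonneg _) ⟨k, Finset.mem_univ k, by positivity⟩
  have hsp : ∀ w : V, ∃ x y : V₀, w = (x : V) + J (y : V) := by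
    have hliF : LinearIndependent ℝ (Sum.elim (E : _ → V) (fun k => J (E k))) := by
      refine gram_li B _ (Sum.elim (fun _ => (1:ℝ)) (fun _ => (-1:ℝ))) ?_ ?_
      · rintro (k|k) <;> norm_num
      · rintro (j|j) (k|k)
        · simpa using hBe j k
        · simp [← hJB, hBJe]
        · simp [hBJe]
        · rw [Sum.elim_inr, Sum.elim_inr, hJB2, hBe]
          by_cases h : j = k <;> simp [h]
    have hspF : ⊤ ≤ Submodule.span ℝ (Set.range (Sum.elim (E : _ → V) (fun k => J (E k)))) := by
      rintro w -
      rw [← E.sum_repr w]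
      refine Submodule.sum_mem _ fun k _ => ?_
      rw [hsmulJ]
      exact Submodule.add_mem _
        (Submodule.smul_mem _ _ (Submodule.subset_span ⟨Sum.inl k, rfl⟩))
        (Submodule.smul_mem _ _ (Submodule.subset_span ⟨Sum.inr k, rfl⟩))
    intro w
    have hw := (Module.Basis.mk hliF hspF).sum_repr w
    rw [Fintype.sum_sum_type] at hw
    simp only [Module.Basis.mk_apply, Sum.elim_inl, Sum.elim_inr] at hw
    refine ⟨⟨∑ k, (Module.Basis.mk hliF hspF).repr w (Sum.inl k) • (E k : V), ?_⟩,
           ⟨∑ k, (Module.Basis.mk hliF hspF).repr w (Sum.inr k) • (E k : V), ?_⟩, ?_⟩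
    · exact Submodule.sum_mem _ fun k _ => Submodule.smul_mem _ _ (hmemE k)
    · exact Submodule.sum_mem _ fun k _ => Submodule.smul_mem _ _ (hmemE k)
    · dsimp only
      rw [map_sum]
      simp only [map_smul]
      exact hw.symm
  -- the Ricci computation
  have hric2 : ∀ (n : ℕ) (b : Module.Basis (Fin n) ℝ V₀),
      (∀ i j, g (b i) (b j) = if i = j then 1 else 0) →
      ∀ u w : V, B (ρ u) w = 2 * ∑ k, A u ((b k : V)) ((b k : V)) w := by
    intro n b horth u w
    have hBb : ∀ j k, B (b j : V) (b k : V) = if j = k then 1 else 0 := fun j k => horth j k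
    have hbmem : ∀ k, (b k : V) ∈ V₀ := fun k => (b k).2
    set C : Fin n ⊕ Fin n → V := Sum.elim (fun k => (b k : V)) (fun k => J (b k : V)) with hC
    set εn : Fin n ⊕ Fin n → ℝ := Sum.elim (fun _ => 1) (fun _ => -1) with hεn
    have hgram : ∀ i j, B (C i) (C j) = if i = j then εn i else 0 := by
      rintro (j|j) (k|k)
      · simpa [hC, hεn] using hBb j k
      · simp [hC, hεn, ← hJB, hJ00 _ (hbmem j) _ (hbmem k)]
      · simp [hC, hεn, hJ00 _ (hbmem j) _ (hbmem k)]
      · rw [hC, hεn]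
        simp only [Sum.elim_inr]
        rw [hJB2, hBb]
        by_cases h : j = k <;> simp [h]
    have hliC := gram_li B C εn (by rintro (k|k) <;> norm_num [hεn]) hgram
    have hspC : ⊤ ≤ Submodule.span ℝ (Set.range C) := by
      rintro z -
      obtain ⟨x, y, rfl⟩ := hsp z
      have hx : (x : V) = ∑ k, b.repr x k • (b k : V) := by
        have h0 := congrArg (V₀.subtype) (b.sum_repr x)
        simp only [map_sum, map_smul, Submodule.subtype_apply] at h0; exact h0.symm
      have hy : (y : V) = ∑ k, b.repr y k • (b k : V) := by
        have h0 := congrArg (V₀.subtype) (b.sum_repr y)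
        simp only [map_sum, map_smul, Submodule.subtype_apply] at h0; exact h0.symm
      refine Submodule.add_mem _ ?_ ?_
      · rw [hx]
        exact Submodule.sum_mem _ fun k _ =>
          Submodule.smul_mem _ _ (Submodule.subset_span ⟨Sum.inl k, rfl⟩)
      · rw [hy, map_sum]
        refine Submodule.sum_mem _ fun k _ => ?_
        rw [map_smul]
        exact Submodule.smul_mem _ _ (Submodule.subset_span ⟨Sum.inr k, rfl⟩)
    have hcb : ∀ i, (Module.Basis.mk hliC hspC) i = C i := fun i => Module.Basis.mk_apply _ _ i
    rw [hρ]
    unfold ricciForm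
    rw [trace_formula B (Module.Basis.mk hliC hspC) εn (by rintro (k|k) <;> norm_num [hεn])
      (by intro i j; rw [hcb, hcb]; exact hgram i j)]
    have hterm : ∀ i, εn i * B ((((1:ℝ)/2) • ((R.flip u).flip w)
          + ((1:ℝ)/2) • ((R.flip w).flip u)) ((Module.Basis.mk hliC hspC) i)) ((Module.Basis.mk hliC hspC) i)
        = εn i * A u (C i) (C i) w := by
      intro i
      rw [hcb]
      congr 1
      have hBL : B ((((1:ℝ)/2) • ((R.flip u).flip w) + ((1:ℝ)/2) • ((R.flip w).flip u)) (C i)) (C i)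
          = 1/2 * A (C i) u w (C i) + 1/2 * A (C i) w u (C i) := by
        simp only [LinearMap.add_apply, LinearMap.smul_apply, LinearMap.flip_apply,
          map_add, map_smul, smul_eq_mul, hR]
      rw [hBL, hclaim1 (C i) u w, hclaim1 (C i) w u, hswap w (C i) u]
      ring
    rw [Finset.sum_congr rfl (fun i _ => hterm i), Fintype.sum_sum_type]
    have h1 : ∀ k : Fin n, εn (Sum.inl k) * A u (C (Sum.inl k)) (C (Sum.inl k)) w
        = A u (b k : V) (b k : V) w := by
      intro k; simp [hεn, hC]
    have h2 : ∀ k : Fin n, εn (Sum.inr k) * A u (C (Sum.inr k)) (C (Sum.inr k)) w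
        = A u (b k : V) (b k : V) w := by
      intro k
      have hx : A u (J (b k : V)) (J (b k : V)) w = - A u (b k : V) (b k : V) w := by
        rw [hm23, hJJ, hneg3]
      simp [hεn, hC, hx]
    rw [Finset.sum_congr rfl fun k _ => h1 k, Finset.sum_congr rfl fun k _ => h2 k, two_mul]
  -- the isomorphism
  set Θlin : (V₀ × V₀) →ₗ[ℝ] V :=
    V₀.subtype.comp (LinearMap.fst ℝ V₀ V₀) + J.comp (V₀.subtype.comp (LinearMap.snd ℝ V₀ V₀))
      with hΘlin
  have hΘapp : ∀ p : V₀ × V₀, Θlin p = (p.1 : V) + J (p.2 : V) := fun p => rfl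
  have hker0 : ∀ p : V₀ × V₀, Θlin p = 0 → p = 0 := by
    intro p hp
    rw [hΘapp] at hp
    have h1 : B (p.1 : V) (p.1 : V) = 0 := by
      have h := congrArg (fun t => B t (p.1 : V)) hp
      simp only [map_add, LinearMap.add_apply, map_zero, LinearMap.zero_apply] at h
      rwa [hJ00 _ p.2.2 _ p.1.2, add_zero] at h
    have hp1 : p.1 = 0 := by
      by_contra hne
      have hpos := hposdef p.1 hne
      rw [hgapp, h1] at hpos
      exact lt_irrefl 0 hpos
    have hp2 : p.2 = 0 := by
      have hJ2 : J (p.2 : V) = 0 := by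
        rw [hp1] at hp
        simpa using hp
      have h22 : (p.2 : V) = 0 := by
        have h := congrArg J hJ2
        rw [hJJ, map_zero] at h
        exact neg_eq_zero.mp h
      exact Subtype.ext h22
    exact Prod.ext hp1 hp2
  have hbij : Function.Bijective Θlin := by
    constructor
    · intro p q hpq
      have h0 : Θlin (p - q) = 0 := by rw [map_sub, hpq, sub_self]
      have := hker0 _ h0
      rwa [sub_eq_zero] at this
    · intro w
      obtain ⟨x, y, rfl⟩ := hsp w
      exact ⟨(x, y), rfl⟩
  refine ⟨V₀, g, (fun x y z w => A x y z w), (fun x y z w => - A (J x) y z w),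
    hgsymm, hposdef, ?_, ?_, ?_, ?_,
    ⟨LinearEquiv.ofBijective Θlin hbij, ?_, ?_⟩⟩
  · -- IsACT A₁
    refine ⟨⟨fun x x' y z w => ?_, fun c x y z w => ?_, fun x y y' z w => ?_,
      fun c x y z w => ?_, fun x y z z' w => ?_, fun c x y z w => ?_,
      fun x y z w w' => ?_, fun c x y z w => ?_⟩,
      fun x y z w => s1 _ _ _ _, fun x y z w => s2 _ _ _ _, fun x y z w => s3 _ _ _ _⟩
    · simp only [Submodule.coe_add]; exact ml1 _ _ _ _ _
    · simp only [Submodule.coe_smul]; exact ml2 _ _ _ _ _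
    · simp only [Submodule.coe_add]; exact ml3 _ _ _ _ _
    · simp only [Submodule.coe_smul]; exact ml4 _ _ _ _ _
    · simp only [Submodule.coe_add]; exact ml5 _ _ _ _ _
    · simp only [Submodule.coe_smul]; exact ml6 _ _ _ _ _
    · simp only [Submodule.coe_add]; exact ml7 _ _ _ _ _
    · simp only [Submodule.coe_smul]; exact ml8 _ _ _ _ _
  · -- IsACT A₂
    refine ⟨⟨fun x x' y z w => ?_, fun c x y z w => ?_, fun x y y' z w => ?_,
      fun c x y z w => ?_, fun x y z z' w => ?_, fun c x y z w => ?_,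
      fun x y z w w' => ?_, fun c x y z w => ?_⟩,
      fun x y z w => ?_, fun x y z w => ?_, fun x y z w => ?_⟩
    · simp only [Submodule.coe_add, map_add, ml1]; ring
    · simp only [Submodule.coe_smul, map_smul, ml2]; ring
    · simp only [Submodule.coe_add, ml3]; ring
    · simp only [Submodule.coe_smul, ml4]; ring
    · simp only [Submodule.coe_add, ml5]; ring
    · simp only [Submodule.coe_smul, ml6]; ring
    · simp only [Submodule.coe_add, ml7]; ring
    · simp only [Submodule.coe_smul, ml8]; ring
    · beta_reduce
      rw [← hm21, s1]
    · beta_reduce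
      rw [s2 (J (x:V)) (y:V) (z:V) (w:V), hm31 (z:V) (w:V) (x:V) (y:V)]
    · beta_reduce
      have e1 : A (J (x:V)) (y:V) (z:V) (w:V) = A (x:V) (y:V) (z:V) (J (w:V)) :=
        (hm41 _ _ _ _).symm
      have e2 : A (J (y:V)) (z:V) (x:V) (w:V) = A (y:V) (z:V) (x:V) (J (w:V)) :=
        (hm41 _ _ _ _).symm
      have e3 : A (J (z:V)) (x:V) (y:V) (w:V) = A (z:V) (x:V) (y:V) (J (w:V)) :=
        (hm41 _ _ _ _).symm
      rw [e1, e2, e3]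
      have := s3 (x:V) (y:V) (z:V) (J (w:V))
      linarith
  · -- Einstein A₁
    intro n b horth x y
    have h2 := hric2 n b horth (x : V) (y : V)
    have hL : B (ρ (x:V)) (y : V) = 2*a₁ * g x y := by
      rw [hρJ]
      simp only [map_add, map_smul, LinearMap.add_apply, LinearMap.smul_apply, smul_eq_mul]
      rw [hJ00 _ x.2 _ y.2, hgapp]
      ring
    rw [hL] at h2
    beta_reduce
    linarith
  · -- Einstein A₂
    intro n b horth x y
    have h2 := hric2 n b horth (J (x : V)) (y : V)
    have hL : B (ρ (J (x:V))) (y : V) = -(2*a₂) * g x y := by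
      rw [hcommJρ, hρJ]
      rw [map_add, map_smul, map_smul, hJJ]
      simp only [map_add, LinearMap.add_apply, map_smul, LinearMap.smul_apply, smul_eq_mul,
        smul_neg, map_neg, LinearMap.neg_apply]
      rw [hJ00 _ x.2 _ y.2, hgapp]
      ring
    rw [hL] at h2
    beta_reduce
    rw [Finset.sum_neg_distrib]
    linarith
  · -- B identity
    intro p q
    rw [LinearEquiv.ofBijective_apply, LinearEquiv.ofBijective_apply, hΘapp, hΘapp]
    simp only [map_add, LinearMap.add_apply, modelB]
    rw [hJ00 _ p.2.2 _ q.1.2, hJB2,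
      show B (p.1:V) (J (q.2:V)) = B (J (p.1:V)) (q.2:V) from (hJB _ _).symm,
      hJ00 _ p.1.2 _ q.2.2, hgapp, hgapp]
    ring
  · -- A identity
    intro p q r s
    rw [LinearEquiv.ofBijective_apply, LinearEquiv.ofBijective_apply,
      LinearEquiv.ofBijective_apply, LinearEquiv.ofBijective_apply, hΘapp, hΘapp, hΘapp, hΘapp]
    simp only [ml1, ml3, ml5, ml7]
    simp only [modelA, acExt, acx, Complex.add_re, Complex.sub_re, Complex.mul_re,
      Complex.add_im, Complex.sub_im, Complex.mul_im, Complex.I_re, Complex.I_im,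
      Complex.ofReal_re, Complex.ofReal_im]
    simp only [hm21, hm31, hm41, hJJ1]
    ring
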